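/- If a function class Γ of bounded measurable functions satisfies S_Σ[Γ] ⊆ Γ, then for any two probability measures ν, μ on X, the IPM satisfies d_Γ(S^Σ[ν], S^Σ[μ]) = d_{Γ_Σ}(ν, μ), where Γ_Σ is the subclass of Σ-invariant functions in Γ. In particular, if ν and μ are both Σ-invariant, then d_Γ(ν, μ) = d_{Γ_Σ}(ν, μ). -/

import Mathlib

open MeasureTheory

/-- Symmetrization operator on functions. -/
noncomputable def symmFun (G : Type*) [Group G] [Fintype G] {X : Type*} [MulAction G X]
    (γ : X → ℝ) : X → ℝ :=
  fun x => (∑ σ : G, γ (σ • x)) / (Fintype.card G : ℝ)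

/-- Symmetrization operator on measures. -/
noncomputable def symmMeas (G : Type*) [Group G] [Fintype G] {X : Type*} [MeasurableSpace X]
    [MulAction G X] (μ : Measure X) : Measure X :=
  (Fintype.card G : ENNReal)⁻¹ • ∑ σ : G, Measure.map (fun x : X => σ • x) μ

/-- Integral probability metric `d_Γ(ν, μ) = sup_{γ∈Γ} (E_ν[γ] − E_μ[γ])`. -/
noncomputable def ipm {X : Type*} [MeasurableSpace X] (Γ : Set (X → ℝ))
    (ν μ : Measure X) : ℝ :=
  ⨆ γ : Γ, (∫ x, γ.1 x ∂ν - ∫ x, γ.1 x ∂μ)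

lemma integrable_of_bdd {X : Type*} [MeasurableSpace X] {μ : Measure X} [IsFiniteMeasure μ]
    {γ : X → ℝ} (h : Measurable γ) {M : ℝ} (hM : ∀ x, |γ x| ≤ M) : Integrable γ μ :=
  (integrable_const M).mono' h.aestronglyMeasurable (Filter.Eventually.of_forall hM)

lemma symmFun_smul (G : Type*) [Group G] [Fintype G] {X : Type*} [MulAction G X]
    (γ : X → ℝ) (τ : G) (x : X) : symmFun G γ (τ • x) = symmFun G γ x := by
  unfold symmFun
  congr 1
  rw [← Equiv.sum_comp (Equiv.mulRight τ) (fun σ => γ (σ • x))]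
  simp [mul_smul]

lemma symmFun_of_invariant (G : Type*) [Group G] [Fintype G] {X : Type*} [MulAction G X]
    {γ : X → ℝ} (h : ∀ (σ : G) (x : X), γ (σ • x) = γ x) : symmFun G γ = γ := by
  funext x
  have hc : (Fintype.card G : ℝ) ≠ 0 := Nat.cast_ne_zero.mpr Fintype.card_ne_zero
  simp only [symmFun, h, Finset.sum_const, Finset.card_univ, nsmul_eq_mul]
  exact mul_div_cancel_left₀ _ hc

lemma integral_symmMeas {X : Type*} [MeasurableSpace X] (G : Type*) [Group G] [Fintype G]
    [MulAction G X] (hmeas : ∀ σ : G, Measurable (fun x : X => σ • x))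
    {μ : Measure X} [IsProbabilityMeasure μ]
    {γ : X → ℝ} (hγ : Measurable γ) {M : ℝ} (hM : ∀ x, |γ x| ≤ M) :
    ∫ x, γ x ∂(symmMeas G μ) = ∫ x, symmFun G γ x ∂μ := by
  have hint : ∀ σ : G, Integrable (fun x => γ (σ • x)) μ :=
    fun σ => integrable_of_bdd (hγ.comp (hmeas σ)) (fun x => hM _)
  have hmap : ∀ σ : G, Integrable γ (Measure.map (fun x : X => σ • x) μ) := by
    intro σ
    have : IsProbabilityMeasure (Measure.map (fun x : X => σ • x) μ) :=
      Measure.isProbabilityMeasure_map (hmeas σ).aemeasurable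
    exact integrable_of_bdd hγ hM
  rw [symmMeas, integral_smul_measure, integral_finset_sum_measure (fun σ _ => hmap σ)]
  have h1 : ∀ σ : G, ∫ x, γ x ∂(Measure.map (fun x : X => σ • x) μ)
      = ∫ x, γ (σ • x) ∂μ := fun σ =>
    integral_map (hmeas σ).aemeasurable hγ.aestronglyMeasurable
  simp only [h1]
  rw [← integral_finset_sum _ (fun σ _ => hint σ)]
  unfold symmFun
  rw [integral_div]
  simp [ENNReal.toReal_inv, smul_eq_mul, inv_mul_eq_div]

/-- If `S_Σ[Γ] ⊆ Γ`, then `d_Γ(S^Σ[ν], S^Σ[μ]) = d_{Γ_Σ}(ν, μ)`; in particular, if `ν`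
and `μ` are `Σ`-invariant, then `d_Γ(ν, μ) = d_{Γ_Σ}(ν, μ)`. -/
theorem ipm_symm_eq_invariant_ipm {X : Type*} [MeasurableSpace X]
    (G : Type*) [Group G] [Fintype G] [MulAction G X]
    (hmeas : ∀ σ : G, Measurable (fun x : X => σ • x))
    (Γ : Set (X → ℝ))
    (hΓmeas : ∀ γ ∈ Γ, Measurable γ) (hΓbdd : ∀ γ ∈ Γ, ∃ M : ℝ, ∀ x, |γ x| ≤ M)
    (hSΓ : ∀ γ ∈ Γ, symmFun G γ ∈ Γ)
    (ν μ : Measure X) [IsProbabilityMeasure ν] [IsProbabilityMeasure μ] :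
    (ipm Γ (symmMeas G ν) (symmMeas G μ)
        = ipm {γ ∈ Γ | ∀ (σ : G) (x : X), γ (σ • x) = γ x} ν μ) ∧
    ((∀ σ : G, Measure.map (fun x : X => σ • x) ν = ν) →
      (∀ σ : G, Measure.map (fun x : X => σ • x) μ = μ) →
      ipm Γ ν μ = ipm {γ ∈ Γ | ∀ (σ : G) (x : X), γ (σ • x) = γ x} ν μ) := by
  set Γinv := {γ ∈ Γ | ∀ (σ : G) (x : X), γ (σ • x) = γ x} with hΓinv
  have key : ∀ (ρ : Measure X), IsProbabilityMeasure ρ →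
      ∀ γ ∈ Γ, ∫ x, γ x ∂(symmMeas G ρ) = ∫ x, symmFun G γ x ∂ρ := by
    intro ρ hρ γ hγ
    obtain ⟨M, hM⟩ := hΓbdd γ hγ
    exact integral_symmMeas G hmeas (hΓmeas γ hγ) hM
  have h1 : ipm Γ (symmMeas G ν) (symmMeas G μ) = ipm Γinv ν μ := by
    have hrange : Set.range (fun γ : Γ =>
          (∫ x, γ.1 x ∂(symmMeas G ν) - ∫ x, γ.1 x ∂(symmMeas G μ)))
        = Set.range (fun γ : Γinv => (∫ x, γ.1 x ∂ν - ∫ x, γ.1 x ∂μ)) := by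
      ext y
      constructor
      · rintro ⟨⟨γ, hγ⟩, rfl⟩
        refine ⟨⟨symmFun G γ, hSΓ γ hγ, fun σ x => symmFun_smul G γ σ x⟩, ?_⟩
        simp [key ν inferInstance γ hγ, key μ inferInstance γ hγ]
      · rintro ⟨⟨γ, hγ, hγinv⟩, rfl⟩
        refine ⟨⟨γ, hγ⟩, ?_⟩
        simp [key ν inferInstance γ hγ, key μ inferInstance γ hγ,
          symmFun_of_invariant G hγinv]
    simp only [ipm, iSup]
    rw [hrange]
  refine ⟨h1, fun hν hμ => ?_⟩
  have hsymm : ∀ (ρ : Measure X), IsProbabilityMeasure ρ →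
      (∀ σ : G, Measure.map (fun x : X => σ • x) ρ = ρ) → symmMeas G ρ = ρ := by
    intro ρ hρ h
    unfold symmMeas
    simp only [h, Finset.sum_const, Finset.card_univ]
    ext s hs
    simp only [Measure.smul_apply, Measure.coe_nnreal_smul_apply, smul_eq_mul, nsmul_eq_mul,
      Measure.coe_smul, Pi.smul_apply]
    rw [← mul_assoc, ENNReal.inv_mul_cancel (by exact_mod_cast Fintype.card_ne_zero)
      (ENNReal.natCast_ne_top _), one_mul]
  calc ipm Γ ν μ = ipm Γ (symmMeas G ν) (symmMeas G μ) := by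
        rw [hsymm ν inferInstance hν, hsymm μ inferInstance hμ]
    _ = ipm Γinv ν μ := h1
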